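/- Let H be a graph with at least one edge, let δ > 0, let G be a δ-dense graph, and let v₁, v₂ ∈ V(G) be distinct non-adjacent vertices. Let G' be the graph obtained from G by adding the edge v₁v₂. Then inj(H,G') − inj(H,G) ≥ 2·e(H)·(1 − δ·v(H)²)·v(G)^{v(H)−2}. -/

import Mathlib

open SimpleGraph

open SimpleGraph Finset

section
variable {α V : Type*} [Fintype α] [Fintype V] [DecidableEq α] [DecidableEq V]

lemma card_eqOn (s : Finset α) (g : α → V) :
    (Finset.univ.filter fun f : α → V => ∀ i ∈ s, f i = g i).card
      = Fintype.card V ^ (Fintype.card α - s.card) := by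
  classical
  rw [← Fintype.card_subtype]
  have e : {f : α → V // ∀ i ∈ s, f i = g i} ≃ ((↑(sᶜ) : Finset α) → V) :=
  { toFun := fun f i => f.1 i
    invFun := fun h => ⟨fun i => if hi : i ∈ s then g i else h ⟨i, by simpa using hi⟩,
      fun i hi => by simp [hi]⟩
    left_inv := fun f => Subtype.ext (funext fun i => by
      by_cases hi : i ∈ s
      · simp [hi, f.2 i hi]
      · simp [hi])
    right_inv := fun h => funext fun i => by
      obtain ⟨i, hi⟩ := i
      have hi' : i ∉ s := by
        simpa [Finset.mem_compl] using hi
      simp [hi'] }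
  rw [Fintype.card_congr e]
  simp [Finset.card_compl]

lemma card_le_fiber (B : Finset (α → V)) (u w : α) (huw : u ≠ w) (v₀ : V) (Q : V → V → Prop)
    [∀ x y, Decidable (Q x y)]
    (hB : ∀ f ∈ B, Q (f u) (f w)) (m : ℝ)
    (hm : ∀ x : V, ((Finset.univ.filter fun y => Q x y).card : ℝ) ≤ m) :
    (B.card : ℝ) ≤ m * ((B.image fun f => Function.update f w v₀).card : ℝ) := by
  classical
  have hfiber : ∀ g ∈ B.image (fun f => Function.update f w v₀),
      ((B.filter fun f => Function.update f w v₀ = g).card : ℝ) ≤ m := by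
    intro g hg
    refine le_trans ?_ (hm (g u))
    have hc : (B.filter fun f => Function.update f w v₀ = g).card
        ≤ (Finset.univ.filter fun y => Q (g u) y).card := by
      apply Finset.card_le_card_of_injOn (fun f => f w)
      · intro f hf
        simp only [Finset.mem_coe, Finset.mem_filter] at hf ⊢
        obtain ⟨hfB, hfg⟩ := hf
        have hu : g u = f u := by
          rw [← hfg, Function.update_of_ne huw]
        exact ⟨Finset.mem_univ _, hu ▸ hB f hfB⟩
      · intro f hf f' hf' hww
        simp only [Finset.coe_filter, Set.mem_setOf_eq] at hf hf'
        funext i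
        by_cases hiw : i = w
        · subst hiw; exact hww
        · have h1 : f i = g i := by rw [← hf.2, Function.update_of_ne hiw]
          have h2 : f' i = g i := by rw [← hf'.2, Function.update_of_ne hiw]
          rw [h1, h2]
    exact_mod_cast hc
  have hsum := Finset.card_eq_sum_card_image (fun f => Function.update f w v₀) B
  calc (B.card : ℝ) = ∑ g ∈ B.image (fun f => Function.update f w v₀),
        ((B.filter fun f => Function.update f w v₀ = g).card : ℝ) := by
        exact_mod_cast congrArg Nat.cast hsum
    _ ≤ ∑ _g ∈ B.image (fun f => Function.update f w v₀), m :=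
        Finset.sum_le_sum hfiber
    _ = m * ((B.image fun f => Function.update f w v₀).card : ℝ) := by
        rw [Finset.sum_const, nsmul_eq_mul, mul_comm]

lemma good_lower [LinearOrder α]
    (H : SimpleGraph α) (G' : SimpleGraph V) [DecidableRel H.Adj] [DecidableRel G'.Adj]
    (δ : ℝ) (hδ : 0 < δ)
    (v₁ v₂ : V) (hne : v₁ ≠ v₂) (hadj' : G'.Adj v₁ v₂)
    (hδn : (1:ℝ) ≤ δ * Fintype.card V)
    (hnn : ∀ x : V, ((Finset.univ.filter fun y => ¬ G'.Adj x y).card : ℝ)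
      ≤ δ * Fintype.card V)
    (a b : α) (hab : H.Adj a b) :
    (Fintype.card V : ℝ) ^ (Fintype.card α - 2)
      - δ * (Fintype.card α : ℝ) ^ 2 * (Fintype.card V : ℝ) ^ (Fintype.card α - 2)
    ≤ ((Finset.univ.filter fun f : α → V => (f a = v₁ ∧ f b = v₂) ∧
        Function.Injective f ∧ ∀ ⦃x y⦄, H.Adj x y → G'.Adj (f x) (f y)).card : ℝ) := by
  classical
  set k := Fintype.card α with hk
  set n := Fintype.card V with hn
  have hab' : a ≠ b := hab.ne
  have hnpos : (0:ℝ) < n := by nlinarith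
  -- the base set
  set F : Finset (α → V) := Finset.univ.filter fun f => f a = v₁ ∧ f b = v₂ with hF
  have hFcard : F.card = n ^ (k - 2) := by
    have hFeq : F = Finset.univ.filter fun f : α → V =>
        ∀ i ∈ ({a, b} : Finset α), f i = (fun i => if i = a then v₁ else v₂) i := by
      ext f
      simp only [hF, Finset.mem_filter, Finset.mem_univ, true_and, Finset.mem_insert,
        Finset.mem_singleton]
      constructor
      · rintro ⟨h1, h2⟩ i hi
        rcases hi with rfl | rfl
        · simpa using h1
        · simpa [hab'.symm] using h2
      · intro h
        refine ⟨by simpa using h a (Or.inl rfl), ?_⟩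
        simpa [hab'.symm] using h b (Or.inr rfl)
    rw [hFeq, card_eqOn]
    congr 2
    rw [Finset.card_insert_of_notMem (by simpa using hab'), Finset.card_singleton]
  -- the index set of "bad events"
  set S : Finset (α × α) := Finset.univ.filter fun q : α × α =>
    q.1 ≠ q.2 ∧ q.2 ≠ a ∧ q.2 ≠ b ∧ (q.1 ≠ a → q.1 ≠ b → q.1 < q.2) with hS
  have hScard : 2 * S.card ≤ k * k := by
    have h1 : S.card ≤ k.choose 2 := by
      have hch : k.choose 2 = ((Finset.univ : Finset α).powersetCard 2).card := by
        rw [Finset.card_powersetCard, Finset.card_univ]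
      rw [hch]
      apply Finset.card_le_card_of_injOn (fun q => ({q.1, q.2} : Finset α))
      · intro q hq
        simp only [hS, Finset.mem_coe, Finset.mem_filter] at hq
        rw [Finset.mem_coe, Finset.mem_powersetCard]
        refine ⟨Finset.subset_univ _, ?_⟩
        rw [Finset.card_insert_of_notMem (by simpa using hq.2.1), Finset.card_singleton]
      · intro q hq q' hq' hqq
        simp only [hS, Finset.coe_filter, Set.mem_setOf_eq, Finset.mem_univ, true_and] at hq hq'
        have hqq2 : ({q.1, q.2} : Finset α) = {q'.1, q'.2} := hqq
        have h1 : q'.1 ∈ ({q.1, q.2} : Finset α) := by rw [hqq2]; simp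
        have h2 : q'.2 ∈ ({q.1, q.2} : Finset α) := by rw [hqq2]; simp
        simp only [Finset.mem_insert, Finset.mem_singleton] at h1 h2
        rcases h1 with h1 | h1
        · rcases h2 with h2 | h2
          · exact absurd (h1 ▸ h2 ▸ rfl) hq'.1
          · exact Prod.ext h1.symm h2.symm ▸ rfl
        · -- q'.1 = q.2, then q'.2 = q.1
          rcases h2 with h2 | h2
          · -- q' = (q.2, q.1): both orders hold, contradiction
            exfalso
            have hlt1 := hq.2.2.2
            have hlt2 := hq'.2.2.2
            have e1 : q'.2 = q.1 := h2
            have e2 : q'.1 = q.2 := h1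
            have hq1a : q.1 ≠ a := by rw [← e1]; exact hq'.2.1
            have hq1b : q.1 ≠ b := by rw [← e1]; exact hq'.2.2.1
            have l1 : q.1 < q.2 := hlt1 hq1a hq1b
            have l2 : q.2 < q.1 := by
              have := hlt2 (by rw [e2]; exact hq.2.1) (by rw [e2]; exact hq.2.2.1)
              rwa [e1, e2] at this
            exact absurd l1 (not_lt.mpr l2.le)
          · exfalso; exact hq'.1 (h1.trans h2.symm)
    calc 2 * S.card ≤ 2 * (k * (k-1) / 2) := by
          rw [← Nat.choose_two_right]; omega
      _ ≤ k * (k - 1) := by omega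
      _ ≤ k * k := Nat.mul_le_mul_left _ (Nat.sub_le _ _)
  -- the bad events
  set Bev : α × α → Finset (α → V) := fun q => F.filter fun f =>
    f q.1 = f q.2 ∨ (H.Adj q.1 q.2 ∧ ¬ G'.Adj (f q.1) (f q.2)) with hBevdef
  have hBev : ∀ q ∈ S, ((Bev q).card : ℝ) ≤ 2 * δ * (n:ℝ) ^ (k - 2) := by
    intro q hq
    obtain ⟨u, w⟩ := q
    simp only [hS, Finset.mem_filter, Finset.mem_univ, true_and] at hq
    obtain ⟨huw, hwa, hwb, -⟩ := hq
    have hk3 : 3 ≤ k := by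
      have hsub : ({w, a, b} : Finset α) ⊆ Finset.univ := Finset.subset_univ _
      have hc : ({w, a, b} : Finset α).card = 3 := by
        rw [Finset.card_insert_of_notMem (by simp [hwa, hwb]),
          Finset.card_insert_of_notMem (by simpa using hab'), Finset.card_singleton]
      calc 3 = ({w, a, b} : Finset α).card := hc.symm
        _ ≤ k := by rw [hk]; exact Finset.card_le_univ _
    have key := card_le_fiber (Bev (u, w)) u w huw v₁
      (fun x y => x = y ∨ (H.Adj u w ∧ ¬ G'.Adj x y))
      (by
        intro f hf
        simp only [hBevdef, Finset.mem_filter] at hf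
        exact hf.2)
      (1 + δ * n)
      (by
        intro x
        have hsub : (Finset.univ.filter fun y => x = y ∨ (H.Adj u w ∧ ¬ G'.Adj x y))
            ⊆ (Finset.univ.filter fun y => x = y) ∪ (Finset.univ.filter fun y => ¬ G'.Adj x y) := by
          intro y hy
          simp only [Finset.mem_filter, Finset.mem_univ, true_and, Finset.mem_union] at hy ⊢
          tauto
        have h1 : (Finset.univ.filter fun y => x = y).card ≤ 1 := by
          have : (Finset.univ.filter fun y => x = y) ⊆ {x} := by
            intro y hy
            simp only [Finset.mem_filter] at hy
            simp [hy.2.symm]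
          simpa using Finset.card_le_card this
        calc ((Finset.univ.filter fun y => x = y ∨ (H.Adj u w ∧ ¬ G'.Adj x y)).card : ℝ)
            ≤ (((Finset.univ.filter fun y => x = y) ∪
                (Finset.univ.filter fun y => ¬ G'.Adj x y)).card : ℝ) := by
              exact_mod_cast Finset.card_le_card hsub
          _ ≤ ((Finset.univ.filter fun y => x = y).card : ℝ)
              + ((Finset.univ.filter fun y => ¬ G'.Adj x y).card : ℝ) := by
              exact_mod_cast Finset.card_union_le _ _
          _ ≤ 1 + δ * n := by
              have := hnn x
              have h1' : ((Finset.univ.filter fun y => x = y).card : ℝ) ≤ 1 := by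
                exact_mod_cast h1
              linarith)
    -- bound the image
    have himg : ((Bev (u, w)).image fun f => Function.update f w v₁) ⊆
        Finset.univ.filter fun f : α → V => ∀ i ∈ ({w, a, b} : Finset α),
          f i = (fun i => if i = a then v₁ else if i = b then v₂ else v₁) i := by
      intro g hg
      simp only [Finset.mem_image] at hg
      obtain ⟨f, hf, rfl⟩ := hg
      simp only [hBevdef, hF, Finset.mem_filter, Finset.mem_univ, true_and] at hf
      obtain ⟨⟨hfa, hfb⟩, -⟩ := hf
      simp only [Finset.mem_filter, Finset.mem_univ, true_and, Finset.mem_insert,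
        Finset.mem_singleton]
      intro i hi
      rcases hi with rfl | rfl | rfl
      · simp [Function.update_self, hwa, hwb]
      · rw [Function.update_of_ne (fun h => hwa h.symm)]
        simp [hfa]
      · rw [Function.update_of_ne (fun h => hwb h.symm)]
        simp [hfb, hab'.symm]
    have himgcard : (((Bev (u, w)).image fun f => Function.update f w v₁).card : ℝ)
        ≤ (n:ℝ) ^ (k - 3) := by
      have := Finset.card_le_card himg
      rw [card_eqOn] at this
      have hcard3 : ({w, a, b} : Finset α).card = 3 := by
        rw [Finset.card_insert_of_notMem (by simp [hwa, hwb]),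
          Finset.card_insert_of_notMem (by simpa using hab'), Finset.card_singleton]
      rw [hcard3] at this
      exact_mod_cast this
    have hpow : (n:ℝ) ^ (k - 3) * (n:ℝ) = (n:ℝ) ^ (k - 2) := by
      rw [← pow_succ]
      congr 1
      omega
    have hpow3 : (0:ℝ) ≤ (n:ℝ) ^ (k - 3) := by positivity
    calc ((Bev (u, w)).card : ℝ)
        ≤ (1 + δ * n) * (((Bev (u, w)).image fun f => Function.update f w v₁).card : ℝ) := key
      _ ≤ (1 + δ * n) * ((n:ℝ) ^ (k - 3)) := by
          apply mul_le_mul_of_nonneg_left himgcard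
          nlinarith
      _ ≤ (2 * (δ * n)) * ((n:ℝ) ^ (k - 3)) := by
          apply mul_le_mul_of_nonneg_right _ hpow3
          linarith
      _ = 2 * δ * (n:ℝ) ^ (k - 2) := by
          rw [← hpow]; ring
  -- covering the bad set
  set Bad : Finset (α → V) := F.filter fun f =>
    ¬ (Function.Injective f ∧ ∀ ⦃x y⦄, H.Adj x y → G'.Adj (f x) (f y)) with hBad
  have hcover : Bad ⊆ S.biUnion Bev := by
    intro f hf
    simp only [hBad, hF, Finset.mem_filter, Finset.mem_univ, true_and] at hf
    obtain ⟨⟨hfa, hfb⟩, hbad⟩ := hf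
    have hfF : f ∈ F := by simp [hF, hfa, hfb]
    -- extract a violated pair
    have key : ∃ u w, u ≠ w ∧ (f u = f w ∨ (H.Adj u w ∧ ¬ G'.Adj (f u) (f w))) := by
      rw [not_and_or] at hbad
      rcases hbad with hbad | hbad
      · rw [Function.not_injective_iff] at hbad
        obtain ⟨u, w, h1, h2⟩ := hbad
        exact ⟨u, w, h2, Or.inl h1⟩
      · push_neg at hbad
        obtain ⟨u, w, h1, h2⟩ := hbad
        exact ⟨u, w, h1.ne, Or.inr ⟨h1, h2⟩⟩
    obtain ⟨u, w, huw, hP⟩ := key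
    have hPsymm : f w = f u ∨ (H.Adj w u ∧ ¬ G'.Adj (f w) (f u)) := by
      rcases hP with h | ⟨h1, h2⟩
      · exact Or.inl h.symm
      · exact Or.inr ⟨h1.symm, fun h => h2 h.symm⟩
    have hnotboth : ¬ ((u = a ∨ u = b) ∧ (w = a ∨ w = b)) := by
      rintro ⟨hu | hu, hw | hw⟩
      · exact huw (hu.trans hw.symm)
      · subst hu; subst hw
        rw [hfa, hfb] at hP
        rcases hP with h | ⟨-, h⟩
        · exact hne h
        · exact h hadj'
      · subst hu; subst hw
        rw [hfa, hfb] at hP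
        rcases hP with h | ⟨-, h⟩
        · exact hne h.symm
        · exact h hadj'.symm
      · exact huw (hu.trans hw.symm)
    rw [Finset.mem_biUnion]
    by_cases hw : w ≠ a ∧ w ≠ b
    · by_cases hu : u ≠ a ∧ u ≠ b
      · rcases lt_or_gt_of_ne huw with h | h
        · exact ⟨(u, w), by simp [hS, huw, hw.1, hw.2, h],
            by simp only [hBevdef, Finset.mem_filter]; exact ⟨hfF, hP⟩⟩
        · exact ⟨(w, u), by simp [hS, huw.symm, hu.1, hu.2, h],
            by simp only [hBevdef, Finset.mem_filter]; exact ⟨hfF, hPsymm⟩⟩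
      · refine ⟨(u, w), ?_, by simp only [hBevdef, Finset.mem_filter]; exact ⟨hfF, hP⟩⟩
        simp only [hS, Finset.mem_filter, Finset.mem_univ, true_and]
        refine ⟨huw, hw.1, hw.2, ?_⟩
        intro h1 h2
        exact absurd (And.intro h1 h2) hu
    · have hu : u ≠ a ∧ u ≠ b := by
        by_contra hu
        push_neg at hu
        rw [not_and_or, not_ne_iff, not_ne_iff] at hw
        refine hnotboth ⟨?_, hw⟩
        by_cases h : u = a
        · exact Or.inl h
        · exact Or.inr (hu h)
      refine ⟨(w, u), ?_, by simp only [hBevdef, Finset.mem_filter]; exact ⟨hfF, hPsymm⟩⟩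
      simp only [hS, Finset.mem_filter, Finset.mem_univ, true_and]
      refine ⟨huw.symm, hu.1, hu.2, ?_⟩
      intro h1 h2
      rw [not_and_or, not_ne_iff, not_ne_iff] at hw
      rcases hw with hw | hw
      · exact absurd hw h1
      · exact absurd hw h2
  -- bound Bad
  have hBadcard : (Bad.card : ℝ) ≤ δ * (k:ℝ)^2 * (n:ℝ) ^ (k - 2) := by
    have h1 : Bad.card ≤ ∑ q ∈ S, (Bev q).card :=
      le_trans (Finset.card_le_card hcover) (Finset.card_biUnion_le)
    calc (Bad.card : ℝ) ≤ ∑ q ∈ S, ((Bev q).card : ℝ) := by exact_mod_cast h1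
      _ ≤ ∑ _q ∈ S, 2 * δ * (n:ℝ) ^ (k - 2) := Finset.sum_le_sum hBev
      _ = (S.card : ℝ) * (2 * δ * (n:ℝ) ^ (k - 2)) := by
          rw [Finset.sum_const, nsmul_eq_mul]
      _ ≤ ((k:ℝ) * k / 2) * (2 * δ * (n:ℝ) ^ (k - 2)) := by
          apply mul_le_mul_of_nonneg_right _ (by positivity)
          have : ((2 * S.card : ℕ) : ℝ) ≤ ((k * k : ℕ) : ℝ) := by exact_mod_cast hScard
          push_cast at this
          linarith
      _ = δ * (k:ℝ)^2 * (n:ℝ) ^ (k - 2) := by ring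
  -- conclude
  have hsplit := Finset.card_filter_add_card_filter_not
    (s := F) (p := fun f => Function.Injective f ∧ ∀ ⦃x y⦄, H.Adj x y → G'.Adj (f x) (f y))
  have hGoodeq : (Finset.univ.filter fun f : α → V => (f a = v₁ ∧ f b = v₂) ∧
      Function.Injective f ∧ ∀ ⦃x y⦄, H.Adj x y → G'.Adj (f x) (f y))
      = F.filter fun f => Function.Injective f ∧ ∀ ⦃x y⦄, H.Adj x y → G'.Adj (f x) (f y) := by
    rw [hF, Finset.filter_filter]
  rw [hGoodeq]
  have h1 : ((F.filter fun f => Function.Injective f ∧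
      ∀ ⦃x y⦄, H.Adj x y → G'.Adj (f x) (f y)).card : ℝ) + (Bad.card : ℝ)
      = (F.card : ℝ) := by
    rw [hBad]
    exact_mod_cast congrArg Nat.cast hsplit
  have h2 : (F.card : ℝ) = (n:ℝ) ^ (k - 2) := by
    rw [hFcard]; push_cast; ring
  linarith

lemma card_ordered_pairs_adj (H : SimpleGraph α) [DecidableRel H.Adj] :
    (Finset.univ.filter fun p : α × α => H.Adj p.1 p.2).card = 2 * H.edgeFinset.card := by
  rw [← SimpleGraph.dart_card_eq_twice_card_edges, ← Fintype.card_subtype]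
  exact Fintype.card_congr
    { toFun := fun p => ⟨p.1, p.2⟩
      invFun := fun d => ⟨d.toProd, d.adj⟩
      left_inv := fun p => rfl
      right_inv := fun d => by cases d; rfl }


end


/-- The number of injective homomorphisms from `H` to `G`. -/
noncomputable def injCount {α β : Type*} (H : SimpleGraph α) (G : SimpleGraph β) : ℕ :=
  Nat.card {f : α → β // Function.Injective f ∧ ∀ ⦃a b⦄, H.Adj a b → G.Adj (f a) (f b)}

/-- Let `H` have at least one edge, `δ > 0`, `G` be `δ`-dense, and `v₁, v₂` be distinct
non-adjacent vertices of `G`.  If `G'` is obtained from `G` by adding the edge `v₁v₂`,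
then `inj(H,G') − inj(H,G) ≥ 2·e(H)·(1 − δ·v(H)²)·v(G)^{v(H)−2}`. -/
theorem add_edge_gain {α V : Type*} [Fintype α] [Fintype V]
    (H : SimpleGraph α) (hH : H.edgeSet.Nonempty) (δ : ℝ) (hδ : 0 < δ)
    (G : SimpleGraph V)
    (hdense : ∀ v : V, (1 - δ) * (Fintype.card V : ℝ) ≤ ((G.neighborSet v).ncard : ℝ))
    (v₁ v₂ : V) (hne : v₁ ≠ v₂) (hnadj : ¬ G.Adj v₁ v₂) :
    2 * (H.edgeSet.ncard : ℝ) * (1 - δ * (Fintype.card α : ℝ) ^ 2) *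
        (Fintype.card V : ℝ) ^ (Fintype.card α - 2) ≤
      (injCount H (G ⊔ edge v₁ v₂) : ℝ) - (injCount H G : ℝ) := by
  classical
  letI : LinearOrder α := LinearOrder.lift' (Fintype.equivFin α) (Fintype.equivFin α).injective
  haveI : DecidableEq α := Classical.decEq α
  haveI : DecidableEq V := Classical.decEq V
  haveI : DecidableRel H.Adj := Classical.decRel _
  haveI : DecidableRel (G ⊔ edge v₁ v₂).Adj := Classical.decRel _
  set k := Fintype.card α with hk
  set n := Fintype.card V with hn
  set G' := G ⊔ edge v₁ v₂ with hG'def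
  have hle : G ≤ G' := le_sup_left
  have hadj' : G'.Adj v₁ v₂ := by
    rw [hG'def, SimpleGraph.sup_adj, SimpleGraph.edge_adj]
    exact Or.inr ⟨Or.inl ⟨rfl, rfl⟩, hne⟩
  -- degree facts
  have hdeg : ∀ v : V, (1 - δ) * (n:ℝ) ≤ ((Finset.univ.filter (G.Adj v)).card : ℝ) := by
    intro v
    have h := hdense v
    have heq : G.neighborSet v = ↑(Finset.univ.filter (G.Adj v)) := by
      ext y; simp [SimpleGraph.mem_neighborSet]
    rwa [heq, Set.ncard_coe_finset] at h
  have hδn : (1:ℝ) ≤ δ * n := by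
    have h := hdeg v₁
    have h2 : (Finset.univ.filter (G.Adj v₁)).card < n := by
      have hne' : Finset.univ.filter (G.Adj v₁) ≠ Finset.univ := by
        intro hcontra
        have hmem : v₁ ∈ Finset.univ.filter (G.Adj v₁) := by
          rw [hcontra]; exact Finset.mem_univ v₁
        rw [Finset.mem_filter] at hmem
        exact G.irrefl hmem.2
      have hlt := Finset.card_lt_card (Finset.ssubset_univ_iff.mpr hne')
      rwa [Finset.card_univ, ← hn] at hlt
    have h3 : ((Finset.univ.filter (G.Adj v₁)).card : ℝ) + 1 ≤ (n:ℝ) := by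
      exact_mod_cast h2
    linarith
  have hnpos : (0:ℝ) < n := by nlinarith
  -- non-neighbour count in G'
  have hnn : ∀ x : V, ((Finset.univ.filter fun y => ¬ G'.Adj x y).card : ℝ) ≤ δ * n := by
    intro x
    have hsub : Finset.univ.filter (G.Adj x) ⊆ Finset.univ.filter (G'.Adj x) := by
      intro y hy
      simp only [Finset.mem_filter, Finset.mem_univ, true_and] at hy ⊢
      exact hle hy
    have h1 : (Finset.univ.filter fun y => ¬ G'.Adj x y).card
        = n - (Finset.univ.filter fun y => G'.Adj x y).card := by
      rw [Finset.filter_not, Finset.card_sdiff_of_subset (Finset.filter_subset _ _), Finset.card_univ]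
    have h2 : (1-δ)*(n:ℝ) ≤ ((Finset.univ.filter fun y => G'.Adj x y).card : ℝ) :=
      le_trans (hdeg x) (by exact_mod_cast Finset.card_le_card hsub)
    have h3 : (Finset.univ.filter fun y => G'.Adj x y).card ≤ n := by
      rw [hn]; exact le_trans (Finset.card_le_card (Finset.filter_subset _ _)) Finset.card_univ.le
    rw [h1]
    rw [Nat.cast_sub h3]
    linarith
  -- counting sets
  set A : SimpleGraph V → Finset (α → V) := fun K => Finset.univ.filter fun f =>
    Function.Injective f ∧ ∀ ⦃x y⦄, H.Adj x y → K.Adj (f x) (f y) with hA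
  have hinjc : ∀ K : SimpleGraph V, injCount H K = (A K).card := by
    intro K
    rw [injCount, Nat.card_eq_fintype_card, Fintype.card_subtype]
  set Good : α × α → Finset (α → V) := fun p => Finset.univ.filter fun f : α → V =>
    (f p.1 = v₁ ∧ f p.2 = v₂) ∧
      Function.Injective f ∧ ∀ ⦃x y⦄, H.Adj x y → G'.Adj (f x) (f y) with hGood
  set E : Finset (α × α) := Finset.univ.filter fun p : α × α => H.Adj p.1 p.2 with hE
  have hEcard : E.card = 2 * H.edgeSet.ncard := by
    have h1 := card_ordered_pairs_adj H
    have h2 : H.edgeSet.ncard = H.edgeFinset.card := by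
      rw [← Nat.card_coe_set_eq, Nat.card_eq_fintype_card, SimpleGraph.edgeFinset_card]
    rw [h2, ← h1]
  -- disjointness and assembly
  have hsum : (A G).card + ∑ p ∈ E, (Good p).card ≤ (A G').card := by
    have hdisj : ∀ p ∈ E, ∀ q ∈ E, p ≠ q → Disjoint (Good p) (Good q) := by
      intro p hp q hq hpq
      rw [Finset.disjoint_left]
      intro f hf hf'
      simp only [hGood, Finset.mem_filter, Finset.mem_univ, true_and] at hf hf'
      obtain ⟨⟨h1, h2⟩, hinj, -⟩ := hf
      obtain ⟨⟨h1', h2'⟩, -, -⟩ := hf'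
      exact hpq (Prod.ext (hinj (h1.trans h1'.symm)) (hinj (h2.trans h2'.symm)))
    have h1 : (E.biUnion Good).card = ∑ p ∈ E, (Good p).card :=
      Finset.card_biUnion hdisj
    have h2 : Disjoint (A G) (E.biUnion Good) := by
      rw [Finset.disjoint_left]
      intro f hf hf'
      rw [Finset.mem_biUnion] at hf'
      obtain ⟨p, hp, hfp⟩ := hf'
      simp only [hGood, Finset.mem_filter, Finset.mem_univ, true_and] at hfp
      simp only [hA, Finset.mem_filter, Finset.mem_univ, true_and] at hf
      simp only [hE, Finset.mem_filter, Finset.mem_univ, true_and] at hp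
      have := hf.2 hp
      rw [hfp.1.1, hfp.1.2] at this
      exact hnadj this
    have h3 : A G ∪ E.biUnion Good ⊆ A G' := by
      intro f hf
      rw [Finset.mem_union] at hf
      simp only [hA, Finset.mem_filter, Finset.mem_univ, true_and]
      rcases hf with hf | hf
      · simp only [hA, Finset.mem_filter, Finset.mem_univ, true_and] at hf
        exact ⟨hf.1, fun x y hxy => hle (hf.2 hxy)⟩
      · rw [Finset.mem_biUnion] at hf
        obtain ⟨p, hp, hfp⟩ := hf
        simp only [hGood, Finset.mem_filter, Finset.mem_univ, true_and] at hfp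
        exact hfp.2
    calc (A G).card + ∑ p ∈ E, (Good p).card
        = (A G).card + (E.biUnion Good).card := by rw [h1]
      _ = (A G ∪ E.biUnion Good).card := (Finset.card_union_of_disjoint h2).symm
      _ ≤ (A G').card := Finset.card_le_card h3
  -- per-edge lower bound
  have hkey : ∀ p ∈ E,
      (n:ℝ) ^ (k - 2) - δ * (k:ℝ)^2 * (n:ℝ) ^ (k - 2) ≤ ((Good p).card : ℝ) := by
    intro p hp
    simp only [hE, Finset.mem_filter, Finset.mem_univ, true_and] at hp
    exact good_lower H G' δ hδ v₁ v₂ hne hadj' hδn hnn p.1 p.2 hp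
  -- final computation
  have hL : (2 * (H.edgeSet.ncard : ℝ)) * ((n:ℝ) ^ (k - 2) - δ * (k:ℝ)^2 * (n:ℝ) ^ (k - 2))
      ≤ ∑ p ∈ E, ((Good p).card : ℝ) := by
    have := Finset.card_nsmul_le_sum E (fun p => ((Good p).card : ℝ))
      ((n:ℝ) ^ (k - 2) - δ * (k:ℝ)^2 * (n:ℝ) ^ (k - 2)) hkey
    rw [nsmul_eq_mul] at this
    have hE' : (E.card : ℝ) = 2 * (H.edgeSet.ncard : ℝ) := by
      rw [hEcard]; push_cast; ring
    rwa [hE'] at this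
  have hfinal : ∑ p ∈ E, ((Good p).card : ℝ) ≤ ((A G').card : ℝ) - ((A G).card : ℝ) := by
    have : ((A G).card : ℝ) + ∑ p ∈ E, ((Good p).card : ℝ) ≤ ((A G').card : ℝ) := by
      exact_mod_cast hsum
    linarith
  rw [hinjc G', hinjc G]
  calc 2 * (H.edgeSet.ncard : ℝ) * (1 - δ * (k:ℝ) ^ 2) * (n:ℝ) ^ (k - 2)
      = (2 * (H.edgeSet.ncard : ℝ)) * ((n:ℝ) ^ (k - 2) - δ * (k:ℝ)^2 * (n:ℝ) ^ (k - 2)) := by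
        ring
    _ ≤ ∑ p ∈ E, ((Good p).card : ℝ) := hL
    _ ≤ ((A G').card : ℝ) - ((A G).card : ℝ) := hfinal
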